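/- Let γ^p and δ^τ be defined on ℕ by γ^p(0)=p, γ^p(t)=+∞ for t>0, and δ^τ(t)=0 for t ≤ τ, δ^τ(t)=+∞ for t>τ. Then the sub-additive closure (γ^p δ^τ)^* = ⊕_{k≥0} (γ^p δ^τ)^k satisfies (γ^p δ^τ)^*(t) ≥ (p/τ)·t for all t ∈ ℕ, where p, τ are positive reals. -/

import Mathlib

/-- Min-plus convolution of functions `ℕ → ℝ∪{+∞}` (modeled as `EReal`). -/
noncomputable def minPlusConv (f g : ℕ → EReal) : ℕ → EReal :=
  fun t => ⨅ s ∈ Finset.Iic t, (f s + g (t - s))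

/-- Unit of min-plus convolution. -/
noncomputable def unitFun : ℕ → EReal := fun t => if t = 0 then 0 else ⊤

/-- Convolution powers: `f^0 = e`, `f^(k+1) = f * f^k`. -/
noncomputable def minPlusPow (f : ℕ → EReal) : ℕ → (ℕ → EReal)
  | 0 => unitFun
  | k + 1 => minPlusConv f (minPlusPow f k)

/-- Sub-additive closure `f^* = ⊕_{k ≥ 0} f^k`. -/
noncomputable def minPlusStar (f : ℕ → EReal) : ℕ → EReal :=
  fun t => ⨅ k : ℕ, minPlusPow f k t

/-- The gain signal `γ^p`. -/
noncomputable def gammaSig (p : ℝ) : ℕ → EReal :=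
  fun t => if t = 0 then (p : EReal) else ⊤

/-- The time-shift signal `δ^τ`. -/
noncomputable def deltaSig (τ : ℝ) : ℕ → EReal :=
  fun t => if (t : ℝ) ≤ τ then 0 else ⊤

lemma base_ge (p τ : ℝ) (hp : 0 < p) (hτ : 0 < τ) (s : ℕ) :
    ((p / τ * s : ℝ) : EReal) ≤ minPlusConv (gammaSig p) (deltaSig τ) s := by
  unfold minPlusConv
  refine le_iInf₂ fun u hu => ?_
  unfold gammaSig deltaSig
  rcases eq_or_ne u 0 with rfl | h
  · by_cases hs : ((s : ℕ) : ℝ) ≤ τ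
    · simp only [Nat.sub_zero, if_pos hs, add_zero, reduceIte]
      exact_mod_cast by nlinarith [div_mul_cancel₀ p hτ.ne', (div_pos hp hτ).le]
    · simp only [Nat.sub_zero, if_neg hs, reduceIte]
      rw [EReal.add_top_of_ne_bot (EReal.coe_ne_bot p)]
      exact le_top
  · rw [if_neg h]
    rw [EReal.top_add_of_ne_bot]
    · exact le_top
    · split <;> simp

lemma pow_ge (p τ : ℝ) (hp : 0 < p) (hτ : 0 < τ) (k : ℕ) :
    ∀ t : ℕ, ((p / τ * t : ℝ) : EReal) ≤
      minPlusPow (minPlusConv (gammaSig p) (deltaSig τ)) k t := by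
  induction k with
  | zero =>
    intro t
    unfold minPlusPow unitFun
    rcases eq_or_ne t 0 with rfl | h
    · simp
    · rw [if_neg h]; exact le_top
  | succ k ih =>
    intro t
    show _ ≤ minPlusConv _ _ t
    unfold minPlusConv
    refine le_iInf₂ fun u hu => ?_
    have hut : u ≤ t := Finset.mem_Iic.mp hu
    have h1 := base_ge p τ hp hτ u
    have h2 := ih (t - u)
    calc ((p / τ * t : ℝ) : EReal)
        = ((p / τ * u + p / τ * (t - u : ℕ) : ℝ) : EReal) := by
          congr 1
          have : ((t - u : ℕ) : ℝ) = (t : ℝ) - u := by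
            push_cast [Nat.cast_sub hut]; ring
          rw [this]; ring
      _ = ((p / τ * u : ℝ) : EReal) + ((p / τ * (t - u : ℕ) : ℝ) : EReal) := by
          rw [← EReal.coe_add]
      _ ≤ _ := add_le_add h1 h2

theorem star_gamma_delta_ge_linear (p τ : ℝ) (hp : 0 < p) (hτ : 0 < τ) :
    ∀ t : ℕ, ((p / τ * t : ℝ) : EReal) ≤
      minPlusStar (minPlusConv (gammaSig p) (deltaSig τ)) t := by
  intro t
  exact le_iInf fun k => pow_ge p τ hp hτ k t
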